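/- Let α̂ : ℕ → ℕ⁺ be a monotonically increasing function. For every m ∈ ℕ there exists a simple graph G with exactly m edges, arboricity at most α̂(m), and at least (2/3)·m·α̂(m) − (2/3)·m − (4/3)·α̂(m)³ − (2/3)·α̂(m)² triangles. -/

import Mathlib

open SimpleGraph

lemma walk_support_getElem {V : Type*} {G : SimpleGraph V} {u v : V} (p : G.Walk u v) :
    ∀ (i : ℕ) (h : i < p.support.length), p.support[i] = p.getVert i := by
  induction p with
  | nil =>
    intro i h
    simp only [SimpleGraph.Walk.support_nil, List.length_singleton] at h
    interval_cases i
    simp [SimpleGraph.Walk.support_nil]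
  | cons h q ih =>
    intro i hi
    cases i with
    | zero => simp [SimpleGraph.Walk.support_cons]
    | succ n =>
      simp only [SimpleGraph.Walk.support_cons, List.getElem_cons_succ,
        SimpleGraph.Walk.getVert_cons_succ]
      exact ih n (by simp only [SimpleGraph.Walk.support_cons, List.length_cons] at hi; omega)

lemma acyclic_of_rank {V : Type*} (G : SimpleGraph V) (g : V → ℕ)
    (hne : ∀ ⦃u v⦄, G.Adj u v → g u ≠ g v)
    (huniq : ∀ ⦃v u w⦄, G.Adj v u → G.Adj v w → g v < g u → g v < g w → u = w) :
    G.IsAcyclic := by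
  classical
  intro v c hc
  obtain ⟨x, hxmem, hxmin⟩ := Finset.exists_min_image c.support.toFinset g
    ⟨v, by simp [SimpleGraph.Walk.start_mem_support]⟩
  rw [List.mem_toFinset] at hxmem
  set c' := c.rotate x hxmem with hc'def
  have hcyc : c'.IsCycle := hc.rotate hxmem
  have hmin : ∀ u ∈ c'.support, g x ≤ g u := by
    intro u hu
    apply hxmin
    rw [List.mem_toFinset]
    rw [SimpleGraph.Walk.support_eq_cons c'] at hu
    rcases List.mem_cons.1 hu with h | h
    · exact h ▸ hxmem
    · have := (SimpleGraph.Walk.support_rotate c x hxmem).mem_iff.1 h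
      rw [SimpleGraph.Walk.support_eq_cons c]
      exact List.mem_cons_of_mem _ this
  have hlen : 3 ≤ c'.length := hcyc.three_le_length
  set y := c'.getVert 1 with hy
  set z := c'.getVert (c'.length - 1) with hz
  have hay : G.Adj x y := by
    have := c'.adj_getVert_succ (i := 0) (by omega)
    rwa [SimpleGraph.Walk.getVert_zero] at this
  have haz : G.Adj z x := by
    have := c'.adj_getVert_succ (i := c'.length - 1) (by omega)
    rw [show c'.length - 1 + 1 = c'.length by omega, SimpleGraph.Walk.getVert_length] at this
    exact this
  have hym : y ∈ c'.support := SimpleGraph.Walk.mem_support_iff_exists_getVert.2 ⟨1, rfl, by omega⟩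
  have hzm : z ∈ c'.support :=
    SimpleGraph.Walk.mem_support_iff_exists_getVert.2 ⟨c'.length - 1, rfl, by omega⟩
  have hxy : g x < g y := lt_of_le_of_ne (hmin y hym) (hne hay)
  have hxz : g x < g z := lt_of_le_of_ne (hmin z hzm) (fun h => hne haz h.symm)
  have hyz : y = z := huniq hay haz.symm hxy hxz
  have hnd : c'.support.tail.Nodup := hcyc.support_nodup
  have hslen : c'.support.length = c'.length + 1 := SimpleGraph.Walk.length_support c'
  have htlen : c'.support.tail.length = c'.length := by simp [hslen, List.length_tail]
  have h0 : c'.support.tail[0]'(by omega) = y := by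
    rw [List.getElem_tail]
    exact walk_support_getElem c' 1 (by omega)
  have h1 : c'.support.tail[c'.length - 2]'(by omega) = z := by
    rw [List.getElem_tail]
    have h2 := walk_support_getElem c' (c'.length - 1) (by omega)
    convert h2 using 2
    omega
  have : (0 : ℕ) = c'.length - 2 := by
    rw [← hnd.getElem_inj_iff (hi := by omega) (hj := by omega), h0, h1, hyz]
  omega

lemma div_eq_iff' {u k b : ℕ} (hk : 0 < k) : u / k = b ↔ b * k ≤ u ∧ u < b * k + k := by
  constructor
  · rintro rfl
    refine ⟨Nat.div_mul_le_self u k, ?_⟩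
    calc u = k * (u / k) + u % k := (Nat.div_add_mod u k).symm
    _ < k * (u / k) + k := Nat.add_lt_add_left (Nat.mod_lt u hk) _
    _ = u / k * k + k := by ring
  · rintro ⟨h1, h2⟩
    have hb : u / k < b + 1 := by
      rw [Nat.div_lt_iff_lt_mul hk]
      calc u < b * k + k := h2
      _ = (b+1) * k := by ring
    have hb2 : b ≤ u / k := by
      rw [Nat.le_div_iff_mul_le hk]; exact h1
    omega

lemma modca {α i a : ℕ} (hα : 0 < α) (hi : i < α) (ha : a < 2*α) :
    a % α = i ↔ (a = i ∨ a = α + i) := by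
  rcases Nat.lt_or_ge a α with h | h
  · rw [Nat.mod_eq_of_lt h]; omega
  · rw [Nat.mod_eq_sub_mod h, Nat.mod_eq_of_lt (by omega)]; omega

lemma six_choose_three (c : ℕ) : 6 * Nat.choose c 3 = (c-2) * ((c-1) * c) := by
  have h := Nat.descFactorial_eq_factorial_mul_choose c 3
  have h2 : c.descFactorial 3 = (c-2) * ((c-1) * (c * 1)) := by
    simp [Nat.descFactorial_succ, Nat.descFactorial_zero]
  have h3 : Nat.factorial 3 = 6 := rfl
  rw [h3] at h
  rw [← h, h2, Nat.mul_one]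
  
noncomputable def arboricity {V : Type*} (G : SimpleGraph V) : ℕ :=
  sInf {n | ∃ f : Fin n → SimpleGraph V,
    (∀ i, (f i).IsAcyclic) ∧ (∀ i, f i ≤ G) ∧
    ∀ e ∈ G.edgeSet, ∃ i, e ∈ (f i).edgeSet}

/-- the double-star relation on block positions -/
def dstar (α i a b : ℕ) : Prop :=
  (a % α = i ∧ ((a < b ∧ b ≤ a + α) ∨ (b < a ∧ b + α ≤ a))) ∨
  (b % α = i ∧ ((b < a ∧ a ≤ b + α) ∨ (a < b ∧ a + α ≤ b)))

instance (α i a b : ℕ) : Decidable (dstar α i a b) := by unfold dstar; infer_instance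

/-- vertex ranking used to certify acyclicity of the forests -/
def rankg (α k B i x : ℕ) : ℕ :=
  if x < B then (x/k)*(k+2) + (if x % k = i then k+1 else if x % k = α + i then k else x % k)
  else B*(k+2) + (x - B)

/-- the main graph: `n` disjoint blocks `K_k` on the first `B = n*k` vertices,
then a matching on the rest. -/
def myG (k B N : ℕ) : SimpleGraph (Fin N) where
  Adj u v := u ≠ v ∧ ((u.val < B ∧ v.val < B ∧ u.val / k = v.val / k) ∨
    (B ≤ u.val ∧ B ≤ v.val ∧ (u.val - B) / 2 = (v.val - B) / 2))
  symm := by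
    constructor
    intro u v h
    obtain ⟨h1, h2⟩ := h
    exact ⟨h1.symm, by tauto⟩
  loopless := ⟨fun u h => h.1 rfl⟩

instance (k B N : ℕ) : DecidableRel (myG k B N).Adj := fun u v => by
  unfold myG; exact inferInstanceAs (Decidable (_ ∧ _))

/-- the `i`-th forest -/
def myF (α k B N i : ℕ) : SimpleGraph (Fin N) where
  Adj u v := u ≠ v ∧ ((u.val < B ∧ v.val < B ∧ u.val / k = v.val / k ∧
      dstar α i (u.val % k) (v.val % k)) ∨
    (B ≤ u.val ∧ B ≤ v.val ∧ (u.val - B) / 2 = (v.val - B) / 2))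
  symm := by
    constructor
    intro u v h
    obtain ⟨h1, h2⟩ := h
    refine ⟨h1.symm, ?_⟩
    unfold dstar at *
    tauto
  loopless := ⟨fun u h => h.1 rfl⟩

/-- For any monotone `alphaHat : ℕ → ℕ⁺` and any `m`, there is a graph with exactly `m`
edges, arboricity at most `alphaHat(m)`, and at least
`(2/3)·m·alphaHat(m) − (2/3)·m − (4/3)·alphaHat(m)³ − (2/3)·alphaHat(m)²` triangles. -/
theorem exists_graph_many_triangles (alphaHat : ℕ → ℕ+) (hmono : Monotone alphaHat) (m : ℕ) :
    ∃ (n : ℕ) (G : SimpleGraph (Fin n)) (_ : DecidableRel G.Adj),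
      G.edgeFinset.card = m ∧
      arboricity G ≤ alphaHat m ∧
      ((G.cliqueFinset 3).card : ℚ) ≥
        2/3 * m * (alphaHat m : ℚ) - 2/3 * m - 4/3 * (alphaHat m : ℚ)^3 - 2/3 * (alphaHat m : ℚ)^2 := by
  classical
  obtain ⟨α, hα, hαdef⟩ : ∃ a, 0 < a ∧ a = ((alphaHat m) : ℕ) := ⟨_, (alphaHat m).2, rfl⟩
  obtain ⟨k, hk⟩ : ∃ k, k = 2*α := ⟨_, rfl⟩
  have hk0 : 0 < k := by omega
  obtain ⟨e, hedef⟩ : ∃ e, e = α*(2*α-1) := ⟨_, rfl⟩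
  have he : 0 < e := by rw [hedef]; exact Nat.mul_pos hα (by omega)
  obtain ⟨n, r, hm, hr⟩ : ∃ n r, m = e*n + r ∧ r < e :=
    ⟨m/e, m%e, (Nat.div_add_mod m e).symm, Nat.mod_lt m he⟩
  obtain ⟨B, hB⟩ : ∃ B, B = n*k := ⟨_, rfl⟩
  obtain ⟨N, hN⟩ : ∃ N, N = B + 2*r := ⟨_, rfl⟩
  set G := myG k B N with hG
  refine ⟨N, G, inferInstance, ?_, ?_, ?_⟩
  · -- edge count
    have hdeg1 : ∀ v : Fin N, v.val < B → G.degree v = k - 1 := by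
      intro v hv
      rw [← SimpleGraph.card_neighborFinset_eq_degree]
      rw [Finset.card_nbij (fun u : Fin N => u.val)
        (t := (Finset.Ico (v.val/k*k) (v.val/k*k + k)).erase v.val) ?hi ?hinj ?hsurj]
      · rw [Finset.card_erase_of_mem, Nat.card_Ico, Nat.add_sub_cancel_left]
        rw [Finset.mem_Ico]
        exact (div_eq_iff' hk0).1 rfl
      case hi =>
        intro u hu
        rw [Finset.mem_coe, SimpleGraph.mem_neighborFinset] at hu
        obtain ⟨hne, h⟩ := hu
        rcases h with ⟨h1, h2, h3⟩ | ⟨h1, _⟩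
        · rw [Finset.mem_coe, Finset.mem_erase, Finset.mem_Ico]
          exact ⟨fun hh => hne (Fin.ext hh).symm, (div_eq_iff' hk0).1 h3.symm⟩
        · omega
      case hinj => exact fun a _ b _ h => Fin.ext h
      case hsurj =>
        intro x hx
        rw [Finset.coe_erase, Set.mem_diff, Finset.coe_Ico, Set.mem_Ico] at hx
        obtain ⟨⟨hx1, hx2⟩, hx3⟩ := hx
        have hx3' : x ≠ v.val := by simpa using hx3
        have hdivlt : v.val / k < n := by
          rw [Nat.div_lt_iff_lt_mul hk0, ← hB]; exact hv
        have hxB : x < B := by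
          calc x < v.val/k*k + k := hx2
          _ = (v.val/k + 1) * k := by ring
          _ ≤ n * k := Nat.mul_le_mul_right k hdivlt
          _ = B := hB.symm
        refine ⟨⟨x, by omega⟩, ?_, rfl⟩
        rw [Finset.mem_coe, SimpleGraph.mem_neighborFinset]
        refine ⟨fun hh => hx3' (congrArg Fin.val hh).symm, Or.inl ⟨hv, hxB, ?_⟩⟩
        exact ((div_eq_iff' hk0).2 ⟨hx1, hx2⟩).symm
    have hdeg2 : ∀ v : Fin N, B ≤ v.val → G.degree v = 1 := by
      intro v hv
      rw [← SimpleGraph.card_neighborFinset_eq_degree]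
      have hvN : v.val < N := v.isLt
      obtain ⟨p, hpN, hpprop⟩ : ∃ p, p < N ∧ ∀ u : ℕ, u < N →
          ((u ≠ v.val ∧ B ≤ u ∧ (u - B)/2 = (v.val - B)/2) ↔ u = p) := by
        by_cases hpar : (v.val - B) % 2 = 0
        · exact ⟨v.val + 1, by omega, fun u hu => by constructor <;> intro h <;> omega⟩
        · exact ⟨v.val - 1, by omega, fun u hu => by constructor <;> intro h <;> omega⟩
      rw [Finset.card_eq_one]
      refine ⟨⟨p, hpN⟩, ?_⟩
      ext u
      rw [SimpleGraph.mem_neighborFinset, Finset.mem_singleton]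
      constructor
      · rintro ⟨hne, h⟩
        rcases h with ⟨h1, _⟩ | ⟨h1, h2, h3⟩
        · omega
        · exact Fin.ext ((hpprop u.val u.isLt).1 ⟨fun hh => hne (Fin.ext hh).symm, h2, h3.symm⟩)
      · rintro rfl
        obtain ⟨hp1, hp2, hp3⟩ := (hpprop p hpN).2 rfl
        exact ⟨fun hh => hp1 (congrArg Fin.val hh).symm, Or.inr ⟨hv, hp2, hp3.symm⟩⟩
    have hcard1 : (Finset.univ.filter (fun v : Fin N => v.val < B)).card = B := by
      rw [Finset.card_nbij (fun u : Fin N => u.val) (t := Finset.range B) ?hi ?hinj ?hsurj]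
      · exact Finset.card_range B
      case hi => intro u hu; simp only [Finset.mem_coe, Finset.mem_filter] at hu; simpa using hu.2
      case hinj => exact fun a _ b _ h => Fin.ext h
      case hsurj =>
        intro x hx
        simp only [Finset.coe_range, Set.mem_Iio] at hx
        exact ⟨⟨x, by omega⟩, by simp [hx], rfl⟩
    have hcard2 : (Finset.univ.filter (fun v : Fin N => ¬ (v.val < B))).card = 2*r := by
      have := Finset.card_filter_add_card_filter_not
        (s := (Finset.univ : Finset (Fin N))) (p := fun v : Fin N => v.val < B)
      rw [Finset.card_univ, Fintype.card_fin] at this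
      omega
    have hsum : ∑ v : Fin N, G.degree v = B * (k-1) + 2*r := by
      have h1 : ∑ v : Fin N, G.degree v
          = ∑ v : Fin N, (if v.val < B then k - 1 else 1) := by
        apply Finset.sum_congr rfl
        intro v _
        by_cases h : v.val < B
        · rw [if_pos h, hdeg1 v h]
        · rw [if_neg h, hdeg2 v (by omega)]
      rw [h1, Finset.sum_ite, Finset.sum_const, Finset.sum_const, hcard1, hcard2,
        smul_eq_mul, smul_eq_mul, mul_comm, mul_one]
    have hkk : k * (k-1) = 2 * e := by
      rw [hk, hedef]
      obtain ⟨t, ht⟩ : ∃ t, t = 2*α - 1 := ⟨_, rfl⟩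
      rw [← ht]
      ring
    have h2m : 2 * G.edgeFinset.card = 2 * m := by
      rw [← SimpleGraph.sum_degrees_eq_twice_card_edges, hsum, hm, hB]
      calc n * k * (k-1) + 2*r = n * (k * (k-1)) + 2*r := by ring
      _ = n * (2*e) + 2*r := by rw [hkk]
      _ = 2 * (e*n + r) := by ring
    omega
  · -- arboricity
    rw [← hαdef]
    apply Nat.sInf_le
    refine ⟨fun i => myF α k B N i.val, ?_, ?_, ?_⟩
    · -- acyclic
      intro i
      have hiα : i.val < α := i.isLt
      apply acyclic_of_rank _ (fun v : Fin N => rankg α k B i.val v.val)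
      · -- adjacent vertices have distinct ranks
        intro u v huv
        obtain ⟨hne0, h2⟩ := huv
        rcases h2 with ⟨hu, hv, hdiv, hds⟩ | ⟨hu, hv, hmt⟩
        · have hmodne : u.val % k ≠ v.val % k := by
            intro hmod
            apply hne0
            apply Fin.ext
            rw [← Nat.div_add_mod u.val k, ← Nat.div_add_mod v.val k, hdiv, hmod]
          intro hgeq
          simp only [rankg, if_pos hu, if_pos hv, hdiv] at hgeq
          have hgeq2 := Nat.add_left_cancel hgeq
          have hak : u.val % k < k := Nat.mod_lt _ hk0
          have hbk : v.val % k < k := Nat.mod_lt _ hk0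
          split_ifs at hgeq2 <;> omega
        · intro hgeq
          simp only [rankg, if_neg (by omega : ¬ u.val < B),
            if_neg (by omega : ¬ v.val < B)] at hgeq
          have hgeq2 := Nat.add_left_cancel hgeq
          exact hne0 (Fin.ext (by omega))
      · -- at most one neighbour of larger rank
        intro v u w hvu hvw hgu hgw
        obtain ⟨hne1, h1⟩ := hvu
        obtain ⟨hne2, h2⟩ := hvw
        rcases h1 with ⟨hv1, hu1, hdiv1, hds1⟩ | ⟨hv1, hu1, hm1⟩ <;>
          rcases h2 with ⟨hv2, hw2, hdiv2, hds2⟩ | ⟨hv2, hw2, hm2⟩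
        · -- both block neighbours
          have hak : v.val % k < k := Nat.mod_lt _ hk0
          have hauk : u.val % k < k := Nat.mod_lt _ hk0
          have hawk : w.val % k < k := Nat.mod_lt _ hk0
          simp only [rankg, if_pos hv1, if_pos hu1, if_pos hw2, ← hdiv1, ← hdiv2] at hgu hgw
          have hgu2 := Nat.lt_of_add_lt_add_left (Nat.lt_of_le_of_lt (le_refl _) hgu)
          have hgw2 := Nat.lt_of_add_lt_add_left (Nat.lt_of_le_of_lt (le_refl _) hgw)
          unfold dstar at hds1 hds2
          rw [modca hα hiα (show v.val % k < 2*α by omega),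
            modca hα hiα (show u.val % k < 2*α by omega)] at hds1
          rw [modca hα hiα (show v.val % k < 2*α by omega),
            modca hα hiα (show w.val % k < 2*α by omega)] at hds2
          apply Fin.ext
          suffices hmod : u.val % k = w.val % k by
            rw [← Nat.div_add_mod u.val k, ← Nat.div_add_mod w.val k, ← hdiv1, ← hdiv2, hmod]
          split_ifs at hgu2 hgw2 <;> omega
        · exact absurd hv1 (by omega)
        · exact absurd hv1 (by omega)
        · -- both matching neighbours
          have hvne : v.val ≠ u.val := fun h => hne1 (Fin.ext h)
          have hwne : v.val ≠ w.val := fun h => hne2 (Fin.ext h)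
          have h1 : u.val < N := u.isLt
          have h2 : w.val < N := w.isLt
          have h3 : v.val < N := v.isLt
          exact Fin.ext (by omega)
    · -- subgraph
      intro i u v h
      obtain ⟨h1, h2⟩ := h
      refine ⟨h1, ?_⟩
      rcases h2 with ⟨a, b, c, d⟩ | hm2
      · exact Or.inl ⟨a, b, c⟩
      · exact Or.inr hm2
    · -- covers all edges
      intro ed hed
      induction ed using Sym2.ind with
      | _ u v =>
        rw [SimpleGraph.mem_edgeSet] at hed
        obtain ⟨hne0, h2⟩ := hed
        rcases h2 with ⟨hu, hv, hdiv⟩ | hmatch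
        · have hak : u.val % k < k := Nat.mod_lt _ hk0
          have hbk : v.val % k < k := Nat.mod_lt _ hk0
          have hmodne : u.val % k ≠ v.val % k := by
            intro hmod
            apply hne0
            apply Fin.ext
            rw [← Nat.div_add_mod u.val k, ← Nat.div_add_mod v.val k, hdiv, hmod]
          rcases Nat.lt_or_ge (u.val % k) (v.val % k) with hlt | hge
          · by_cases hcase : v.val % k ≤ u.val % k + α
            · refine ⟨⟨u.val % k % α, Nat.mod_lt _ hα⟩, ?_⟩
              rw [SimpleGraph.mem_edgeSet]
              exact ⟨hne0, Or.inl ⟨hu, hv, hdiv, Or.inl ⟨rfl, Or.inl ⟨hlt, hcase⟩⟩⟩⟩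
            · refine ⟨⟨v.val % k % α, Nat.mod_lt _ hα⟩, ?_⟩
              rw [SimpleGraph.mem_edgeSet]
              exact ⟨hne0, Or.inl ⟨hu, hv, hdiv, Or.inr ⟨rfl, Or.inr ⟨hlt, by omega⟩⟩⟩⟩
          · have hlt : v.val % k < u.val % k := by omega
            by_cases hcase : u.val % k ≤ v.val % k + α
            · refine ⟨⟨v.val % k % α, Nat.mod_lt _ hα⟩, ?_⟩
              rw [SimpleGraph.mem_edgeSet]
              exact ⟨hne0, Or.inl ⟨hu, hv, hdiv, Or.inr ⟨rfl, Or.inl ⟨hlt, hcase⟩⟩⟩⟩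
            · refine ⟨⟨u.val % k % α, Nat.mod_lt _ hα⟩, ?_⟩
              rw [SimpleGraph.mem_edgeSet]
              exact ⟨hne0, Or.inl ⟨hu, hv, hdiv, Or.inl ⟨rfl, Or.inr ⟨hlt, by omega⟩⟩⟩⟩
        · exact ⟨⟨0, hα⟩, by rw [SimpleGraph.mem_edgeSet]; exact ⟨hne0, Or.inr hmatch⟩⟩
  · -- triangles
    have hdivb : ∀ b x : ℕ, x < k → (b*k + x)/k = b := by
      intro b x hx
      rw [Nat.add_comm, Nat.mul_comm, Nat.add_mul_div_left x b hk0, Nat.div_eq_of_lt hx,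
        Nat.zero_add]
    have hT : n * (Nat.choose k 3) ≤ (G.cliqueFinset 3).card := by
      rcases Nat.eq_zero_or_pos n with hn0 | hn
      · simp [hn0]
      · have hkB : k ≤ B := by
          rw [hB]
          calc k = 1 * k := (Nat.one_mul k).symm
          _ ≤ n * k := Nat.mul_le_mul_right k hn
        have hNpos : 0 < N := by omega
        have hcardS : ((Finset.range n) ×ˢ ((Finset.range k).powersetCard 3)).card
            = n * Nat.choose k 3 := by
          rw [Finset.card_product, Finset.card_range, Finset.card_powersetCard,
            Finset.card_range]
        rw [← hcardS]
        apply Finset.card_le_card_of_injOn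
          (fun p => p.2.image (fun x => (⟨(p.1*k + x) % N, Nat.mod_lt _ hNpos⟩ : Fin N)))
        · rintro ⟨b, t⟩ hp
          rw [Finset.mem_coe, Finset.mem_product, Finset.mem_range, Finset.mem_powersetCard] at hp
          obtain ⟨hbn, hts, htc⟩ := hp
          have hbound : ∀ x ∈ t, b*k + x < B := by
            intro x hx
            have hxk : x < k := Finset.mem_range.1 (hts hx)
            calc b*k + x < b*k + k := by omega
            _ = (b+1)*k := by ring
            _ ≤ n*k := Nat.mul_le_mul_right k (by omega)
            _ = B := hB.symm
          have hmodid : ∀ x ∈ t, (b*k + x) % N = b*k + x := by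
            intro x hx
            exact Nat.mod_eq_of_lt (by have := hbound x hx; omega)
          rw [Finset.mem_coe, SimpleGraph.mem_cliqueFinset_iff, SimpleGraph.isNClique_iff]
          constructor
          · rintro x hx y hy hxy
            simp only [Finset.coe_image, Set.mem_image, Finset.mem_coe] at hx hy
            obtain ⟨xa, hxa, rfl⟩ := hx
            obtain ⟨ya, hya, rfl⟩ := hy
            have hxk : xa < k := Finset.mem_range.1 (hts hxa)
            have hyk : ya < k := Finset.mem_range.1 (hts hya)
            refine ⟨hxy, Or.inl ?_⟩
            simp only [hmodid xa hxa, hmodid ya hya]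
            refine ⟨by have := hbound xa hxa; omega, by have := hbound ya hya; omega, ?_⟩
            rw [hdivb b xa hxk, hdivb b ya hyk]
          · rw [Finset.card_image_of_injOn, htc]
            intro x hx y hy hxy
            have h1 : (b*k + x) % N = (b*k + y) % N := congrArg Fin.val hxy
            rw [hmodid x hx, hmodid y hy] at h1
            omega
        · rintro ⟨b, t⟩ hp ⟨b', t'⟩ hp' heq
          simp only [Finset.mem_coe, Finset.mem_product, Finset.mem_range,
            Finset.mem_powersetCard] at hp hp'
          obtain ⟨hbn, hts, htc⟩ := hp
          obtain ⟨hbn', hts', htc'⟩ := hp'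
          have hbound : ∀ (b : ℕ), b < n → ∀ x, x < k → b*k + x < N := by
            intro b hb x hx
            have : b*k + x < (b+1)*k := by
              calc b*k + x < b*k + k := by omega
              _ = (b+1)*k := by ring
            have h2 : (b+1)*k ≤ n*k := Nat.mul_le_mul_right k (by omega)
            omega
          have key : ∀ x ∈ t, ∃ x' ∈ t', b*k + x = b'*k + x' := by
            intro x hx
            have hxk : x < k := Finset.mem_range.1 (hts hx)
            have heq2 : t.image (fun x => (⟨(b*k + x) % N, Nat.mod_lt _ (by omega)⟩ : Fin N))
                = t'.image (fun x => (⟨(b'*k + x) % N, Nat.mod_lt _ (by omega)⟩ : Fin N)) := heq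
            have hmm : (⟨(b*k + x) % N, Nat.mod_lt _ (by omega)⟩ : Fin N)
                ∈ t'.image (fun x => (⟨(b'*k + x) % N, Nat.mod_lt _ (by omega)⟩ : Fin N)) := by
              rw [← heq2]
              exact Finset.mem_image_of_mem _ hx
            rw [Finset.mem_image] at hmm
            obtain ⟨x', hx', hxx⟩ := hmm
            have hx'k : x' < k := Finset.mem_range.1 (hts' hx')
            have h1 : (b'*k + x') % N = (b*k + x) % N := congrArg Fin.val hxx
            rw [Nat.mod_eq_of_lt (hbound b hbn x hxk),
              Nat.mod_eq_of_lt (hbound b' hbn' x' hx'k)] at h1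
            exact ⟨x', hx', h1.symm⟩
          have hbb : b = b' := by
            have htne : t.Nonempty := Finset.card_pos.1 (by omega)
            obtain ⟨x, hx⟩ := htne
            obtain ⟨x', hx', hxx⟩ := key x hx
            have hxk : x < k := Finset.mem_range.1 (hts hx)
            have hx'k : x' < k := Finset.mem_range.1 (hts' hx')
            rw [← hdivb b x hxk, hxx]
            exact hdivb b' x' hx'k
          subst hbb
          have hsub : t ⊆ t' := by
            intro x hx
            obtain ⟨x', hx', hxx⟩ := key x hx
            have : x = x' := by omega
            rwa [this]
          have : t = t' := Finset.eq_of_subset_of_card_le hsub (by omega)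
          rw [this]
    -- now the rational inequality
    have hαQ : ((alphaHat m : ℚ)) = (α : ℚ) := by rw [hαdef]
    rw [ge_iff_le, hαQ]
    have hcast : ((n * Nat.choose k 3 : ℕ) : ℚ) ≤ ((G.cliqueFinset 3).card : ℚ) :=
      Nat.cast_le.2 hT
    refine le_trans ?_ hcast
    push_cast
    have hA1 : (1:ℚ) ≤ (α:ℚ) := by exact_mod_cast hα
    have hm' : (m:ℚ) = (e:ℚ) * (n:ℚ) + (r:ℚ) := by exact_mod_cast hm
    have hE : (e:ℚ) = (α:ℚ) * (2*(α:ℚ) - 1) := by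
      rw [hedef]
      have h1 : (1:ℕ) ≤ 2*α := by omega
      push_cast [h1]
      ring
    have hR : (r:ℚ) ≤ (e:ℚ) - 1 := by
      have : (r:ℚ) + 1 ≤ (e:ℚ) := by exact_mod_cast hr
      linarith
    have hn0 : (0:ℚ) ≤ (n:ℚ) := Nat.cast_nonneg n
    have hC6 : 6 * ((Nat.choose k 3 : ℕ):ℚ) = (2*(α:ℚ)-2)*((2*(α:ℚ)-1)*(2*(α:ℚ))) := by
      have h := six_choose_three k
      have hcq : ((6 * Nat.choose k 3 : ℕ):ℚ) = (((k-2) * ((k-1) * k) : ℕ):ℚ) := by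
        exact_mod_cast congrArg (Nat.cast (R := ℚ)) h
      have h2 : (2:ℕ) ≤ k := by omega
      have h1 : (1:ℕ) ≤ k := by omega
      rw [hk] at *
      push_cast [Nat.cast_sub h2, Nat.cast_sub h1] at hcq ⊢
      push_cast at hcq
      linarith [hcq]
    have hprod : (0:ℚ) ≤ ((α:ℚ) - 1) * ((e:ℚ) - 1 - (r:ℚ)) :=
      mul_nonneg (by linarith) (by linarith)
    rw [hE] at hm' hprod
    have hCval : ((Nat.choose k 3:ℕ):ℚ) = (4*(α:ℚ)^3 - 6*(α:ℚ)^2 + 2*(α:ℚ))/3 := by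
      linear_combination hC6 / 6
    rw [hm', hCval]
    have hAA : (1:ℚ) ≤ (α:ℚ)*(α:ℚ) := by
      calc (1:ℚ) = 1*1 := by norm_num
      _ ≤ (α:ℚ)*(α:ℚ) := mul_le_mul hA1 hA1 (by norm_num) (by linarith)
    have h1 : (r:ℚ)*((α:ℚ)-1) ≤ 2*(α:ℚ)^3 - 3*(α:ℚ)^2 + 1 := by
      have h2 := hprod
      ring_nf at h2 ⊢
      linarith [h2]
    ring_nf at h1 hAA ⊢
    linarith [h1, hAA, hn0, hA1]
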